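/- (Inviscid limit) Let ψ^(N) be the half-time flow maps of the regularized solutions and suppose there is a continuous map ψ^∞ : X^ℕ → X^ℕ with ψ^(N) → ψ^∞ in the sense of map convergence. Then for all initial conditions a and boundary conditions (b_t): (i) for every lattice point (n,t) ∈ L the limit u_n^∞(t) = lim_{N→∞} u_n^(N)(t) exists; (ii) the field u^∞ solves the ideal system with these initial and boundary conditions; (iii) for every integer t ≥ 1, u^∞(t) = φ^∞_{b_{t−1}} ∘ ⋯ ∘ φ^∞_{b_1} ∘ φ^∞_{b_0}(a), where φ^∞_b = ψ^∞ ∘ ψ^∞ + β_b. -/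

import Mathlib

open Filter Topology

namespace SSRG

variable {X : Type*}

/-- Upward shift map `σ₊(a) = (a₂, a₃, …)`. -/
def sigPlus (a : ℕ → X) : ℕ → X := fun i => a (i + 1)

/-- Downward shift map `σ₋(a) = (0, a₁, a₂, …)`. -/
def sigMinus [Zero X] (a : ℕ → X) : ℕ → X := fun i =>
  match i with
  | 0 => 0
  | j + 1 => a j

/-- Coupling map `ξ(a) = (f(a₁,a₂), g(a₁,a₂), 0, 0, …)`. -/
def xiMap [Zero X] (f g : X → X → X) (a : ℕ → X) : ℕ → X := fun i =>
  match i with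
  | 0 => f (a 0) (a 1)
  | 1 => g (a 0) (a 1)
  | _ + 2 => 0

/-- Boundary coupling map `β_b(a) = (g(b,a₁), 0, 0, …)`. -/
def betaMap [Zero X] (g : X → X → X) (b : X) (a : ℕ → X) : ℕ → X := fun i =>
  match i with
  | 0 => g b (a 0)
  | _ + 1 => 0

/-- The renormalization group operator `R_g[ψ] = σ₋ ∘ ψ ∘ ψ ∘ σ₊ + ξ`. -/
def RGop [AddCommMonoid X] (f g : X → X → X) (ψ : (ℕ → X) → (ℕ → X)) :
    (ℕ → X) → (ℕ → X) :=
  fun a => sigMinus (ψ (ψ (sigPlus a))) + xiMap f g a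

/-- The ideal equation at scale `n ≥ 1` and time `t = m·2⁻ⁿ`, `m ≥ 1`.
A field `u : ℕ → ℕ → X` records `u n m = uₙ(m·τₙ)`; row `0` is the boundary row,
`u 0 t = b_t` at integer times `t`. -/
def IdealEq [AddCommMonoid X] (f g : X → X → X) (u : ℕ → ℕ → X) (n m : ℕ) : Prop :=
  if m % 2 = 1 then
    u n m = f (u n (m - 1)) (u (n + 1) (2 * (m - 1)))
  else
    u n m = f (u n (m - 1)) (u (n + 1) (2 * (m - 1))) +
      g (u (n - 1) ((m - 2) / 2)) (u n (m - 2))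

/-- The regularized solution at regularization scale number `N`, with initial
conditions `a` (so `uₙ(0) = aₙ = a (n-1)` for `1 ≤ n ≤ N`) and boundary conditions
`b` (`u₀(t) = b t`): all variables at scales `n > N` vanish and the ideal equations
hold for `1 ≤ n ≤ N`. -/
def IsRegSol [AddCommMonoid X] (f g : X → X → X) (N : ℕ) (a b : ℕ → X)
    (u : ℕ → ℕ → X) : Prop :=
  (∀ m, u 0 m = b m) ∧
  (∀ n, 1 ≤ n → n ≤ N → u n 0 = a (n - 1)) ∧
  (∀ n, N < n → ∀ m, u n m = 0) ∧
  (∀ n m, 1 ≤ n → n ≤ N → 1 ≤ m → IdealEq f g u n m)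

/-- The state `u(1/2) = (u₁(1/2), u₂(1/2), …)` of a field. -/
def halfState (u : ℕ → ℕ → X) : ℕ → X := fun i => u (i + 1) (2 ^ i)

/-- The state `u(1) = (u₁(1), u₂(1), …)` of a field. -/
def unitState (u : ℕ → ℕ → X) : ℕ → X := fun i => u (i + 1) (2 ^ (i + 1))

/-- The state `u(t) = (u₁(t), u₂(t), …)` of a field at an integer time `t`. -/
def intState (u : ℕ → ℕ → X) (t : ℕ) : ℕ → X := fun i => u (i + 1) (t * 2 ^ (i + 1))

/-- A weak solution of the ideal system: initial conditions `a`, boundary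
conditions `b`, and the ideal equations at all points of the lattice. -/
def IsWeakSol [AddCommMonoid X] (f g : X → X → X) (a b : ℕ → X) (u : ℕ → ℕ → X) : Prop :=
  (∀ m, u 0 m = b m) ∧
  (∀ n, 1 ≤ n → u n 0 = a (n - 1)) ∧
  (∀ n m, 1 ≤ n → 1 ≤ m → IdealEq f g u n m)

/-- Convergence of maps: `ψ N (a_N) → ψ∞ a` for every convergent sequence `a_N → a`
in `X^ℕ` with the product topology. -/
def MapConv [TopologicalSpace X] (ψ : ℕ → (ℕ → X) → (ℕ → X))
    (ψinf : (ℕ → X) → (ℕ → X)) : Prop :=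
  ∀ (aN : ℕ → ℕ → X) (a : ℕ → X), Tendsto aN atTop (𝓝 a) →
    Tendsto (fun N => ψ N (aN N)) atTop (𝓝 (ψinf a))

/-- Limiting unit-time flow map `φ^∞_b = ψ^∞ ∘ ψ^∞ + β_b`. -/
def phiInf [AddCommMonoid X] (g : X → X → X) (ψinf : (ℕ → X) → (ℕ → X)) (b : X) :
    (ℕ → X) → (ℕ → X) :=
  fun a => ψinf (ψinf a) + betaMap g b a

/-- Iterated composition `φ^∞_{b_{t-1}} ∘ ⋯ ∘ φ^∞_{b_1} ∘ φ^∞_{b_0}`. -/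
def phiIter [AddCommMonoid X] (g : X → X → X) (ψinf : (ℕ → X) → (ℕ → X))
    (b : ℕ → X) : ℕ → (ℕ → X) → (ℕ → X)
  | 0 => id
  | t + 1 => fun a => phiInf g ψinf (b t) (phiIter g ψinf b t a)

section Aux
variable [AddCommMonoid X] {f g : X → X → X}

lemma tshift_sol {N : ℕ} {a b : ℕ → X} {v : ℕ → ℕ → X}
    (hv : IsRegSol f g N a b v) (t : ℕ) :
    IsRegSol f g N (intState v t) (fun m => b (m + t)) (fun n m => v n (m + t * 2 ^ n)) := by
  obtain ⟨hb, ha, h0, he⟩ := hv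
  refine ⟨fun m => ?_, fun n h1 h2 => ?_, fun n h m => h0 n h _, fun n m h1 h2 hm => ?_⟩
  · simpa using hb (m + t)
  · show v n (0 + t * 2 ^ n) = intState v t (n - 1)
    unfold intState
    rw [show n - 1 + 1 = n by omega, zero_add]
  · have hE := he n (m + t * 2 ^ n) h1 h2 (by omega)
    have hp : 2 ^ n = 2 ^ (n - 1) * 2 := by
      rw [← pow_succ]; congr 1; omega
    have hp1 : 2 ^ (n + 1) = 2 ^ (n - 1) * 2 * 2 := by
      rw [← pow_succ, ← pow_succ]; congr 1; omega
    unfold IdealEq at hE ⊢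
    simp only []
    generalize hs : t * 2 ^ (n - 1) = s
    have h2n : t * 2 ^ n = s * 2 := by rw [hp, ← hs]; ring
    have h2n1 : t * 2 ^ (n + 1) = s * 2 * 2 := by rw [hp1, ← hs]; ring
    rw [h2n] at hE ⊢
    rw [h2n1]
    have hmod : (m + s * 2) % 2 = m % 2 := by omega
    by_cases hpar : m % 2 = 1
    · rw [if_pos hpar]
      rw [if_pos (by omega : (m + s * 2) % 2 = 1)] at hE
      rw [hE, show m + s * 2 - 1 = m - 1 + s * 2 by omega,
        show 2 * (m - 1 + s * 2) = 2 * (m - 1) + s * 2 * 2 by omega]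
    · rw [if_neg hpar]
      rw [if_neg (by omega : ¬ (m + s * 2) % 2 = 1)] at hE
      have hm2 : 2 ≤ m := by omega
      rw [hE, show m + s * 2 - 1 = m - 1 + s * 2 by omega,
        show 2 * (m - 1 + s * 2) = 2 * (m - 1) + s * 2 * 2 by omega,
        show m + s * 2 - 2 = m - 2 + s * 2 by omega,
        show (m - 2 + s * 2) / 2 = (m - 2) / 2 + s by omega]

lemma sshift_sol {N : ℕ} {a b : ℕ → X} {v : ℕ → ℕ → X}
    (hv : IsRegSol f g (N + 1) a b v) :
    IsRegSol f g N (sigPlus a) (v 1) (fun n m => v (n + 1) m) := by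
  obtain ⟨hb, ha, h0, he⟩ := hv
  refine ⟨fun m => rfl, fun n h1 h2 => ?_, fun n h m => h0 (n + 1) (by omega) m,
    fun n m h1 h2 hm => ?_⟩
  · show v (n + 1) 0 = sigPlus a (n - 1)
    rw [ha (n + 1) (by omega) (by omega)]
    unfold sigPlus
    congr 1; omega
  · have hE := he (n + 1) m (by omega) (by omega) hm
    unfold IdealEq at hE ⊢
    simpa [show n - 1 + 1 = n by omega] using hE


lemma halfagree {N : ℕ} {a b bz : ℕ → X} {v z : ℕ → ℕ → X}
    (hv : IsRegSol f g N a b v) (hz : IsRegSol f g N (halfState v) bz z) :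
    ∀ k n m, 2 ≤ n → m ≤ 2 ^ (n - 1) → m * 2 ^ (N - n) ≤ k →
      v n (m + 2 ^ (n - 1)) = z n m := by
  intro k
  induction k using Nat.strong_induction_on with
  | _ k IH =>
  intro n m hn hm hk
  by_cases hnN : N < n
  · rw [hv.2.2.1 n hnN, hz.2.2.1 n hnN]
  push_neg at hnN
  rcases Nat.eq_zero_or_pos m with hm0 | hm1
  · subst hm0
    rw [hz.2.1 n (by omega) hnN, zero_add]
    show v n (2 ^ (n - 1)) = halfState v (n - 1)
    unfold halfState
    rw [show n - 1 + 1 = n by omega]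
  have hEpos : (2:ℕ) ^ (N - n) ≥ 1 := Nat.one_le_two_pow
  have hEv := hv.2.2.2 n (m + 2 ^ (n - 1)) (by omega) hnN (by omega)
  have hEz := hz.2.2.2 n m (by omega) hnN hm1
  obtain ⟨p, rfl⟩ : ∃ p, n = p + 2 := ⟨n - 2, by omega⟩
  have hQ : (0:ℕ) < 2 ^ p := Nat.two_pow_pos p
  have e1 : (2:ℕ) ^ (p + 2 - 1) = 2 * 2 ^ p := by
    rw [show p + 2 - 1 = p + 1 by omega, pow_succ]; ring
  have e2 : (2:ℕ) ^ (p + 2) = 4 * 2 ^ p := by rw [pow_succ, pow_succ]; ring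
  -- bound transfers
  have hb1 : ∀ m', m' < m → m' * 2 ^ (N - (p + 2)) < k := by
    intro m' hm'
    calc m' * 2 ^ (N - (p + 2)) < m * 2 ^ (N - (p + 2)) :=
          mul_lt_mul_of_pos_right hm' (Nat.two_pow_pos _)
      _ ≤ k := hk
  unfold IdealEq at hEv hEz
  rw [e1] at hEv hm ⊢
  have hmod : (m + 2 * 2 ^ p) % 2 = m % 2 := by omega
  -- second argument of f in both equations agree
  have hf2 : v (p + 2 + 1) (2 * (m + 2 * 2 ^ p - 1)) = z (p + 2 + 1) (2 * (m - 1)) := by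
    by_cases hN3 : N < p + 3
    · rw [hv.2.2.1 _ (by omega), hz.2.2.1 _ (by omega)]
    · have hkk : 2 * (m - 1) * 2 ^ (N - (p + 3)) < k := by
        have hE3 : (2:ℕ) ^ (N - (p + 2)) = 2 * 2 ^ (N - (p + 3)) := by
          rw [show N - (p + 2) = (N - (p + 3)) + 1 by omega, pow_succ]; ring
        have := hk
        rw [hE3] at this
        have h1 := hb1 (m - 1) (by omega)
        rw [hE3] at h1
        nlinarith [Nat.two_pow_pos (N - (p + 3))]
      have := IH (2 * (m - 1) * 2 ^ (N - (p + 3))) (by omega) (p + 3) (2 * (m - 1))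
        (by omega) (by rw [show p + 3 - 1 = p + 2 by omega, e2]; omega) (le_refl _)
      rw [show p + 3 - 1 = p + 2 by omega, e2] at this
      rw [show 2 * (m + 2 * 2 ^ p - 1) = 2 * (m - 1) + 4 * 2 ^ p by omega]
      exact this
  have hf1 : v (p + 2) (m + 2 * 2 ^ p - 1) = z (p + 2) (m - 1) := by
    have := IH ((m - 1) * 2 ^ (N - (p + 2))) (hb1 _ (by omega))
      (p + 2) (m - 1) (by omega) (by rw [e1]; omega) (le_refl _)
    rw [e1] at this
    rw [show m + 2 * 2 ^ p - 1 = m - 1 + 2 * 2 ^ p by omega]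
    exact this
  by_cases hpar : m % 2 = 1
  · rw [if_pos hpar] at hEz
    rw [if_pos (by omega : (m + 2 * 2 ^ p) % 2 = 1)] at hEv
    rw [hEv, hEz, hf1, hf2]
  · rw [if_neg hpar] at hEz
    rw [if_neg (by omega : ¬ (m + 2 * 2 ^ p) % 2 = 1)] at hEv
    have hm2 : 2 ≤ m := by omega
    have hg2 : v (p + 2) (m + 2 * 2 ^ p - 2) = z (p + 2) (m - 2) := by
      have := IH ((m - 2) * 2 ^ (N - (p + 2))) (hb1 _ (by omega))
        (p + 2) (m - 2) (by omega) (by rw [e1]; omega) (le_refl _)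
      rw [e1] at this
      rw [show m + 2 * 2 ^ p - 2 = m - 2 + 2 * 2 ^ p by omega]
      exact this
    have hg1 : v (p + 2 - 1) ((m + 2 * 2 ^ p - 2) / 2) = z (p + 2 - 1) ((m - 2) / 2) := by
      rcases Nat.eq_zero_or_pos p with hp0 | hp1
      · subst hp0
        -- n = 2, m = 2
        have hm2' : m = 2 := by omega
        subst hm2'
        show v 1 ((2 + 2 * 2 ^ 0 - 2) / 2) = z 1 ((2 - 2) / 2)
        norm_num
        rw [hz.2.1 1 (by omega) (by omega)]
        show v 1 1 = halfState v 0
        unfold halfState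
        norm_num
      · have hE2 : (2:ℕ) ^ (N - (p + 1)) = 2 * 2 ^ (N - (p + 2)) := by
          rw [show N - (p + 1) = (N - (p + 2)) + 1 by omega, pow_succ]; ring
        have hkk : (m - 2) / 2 * 2 ^ (N - (p + 1)) < k := by
          have heq : (m - 2) / 2 * 2 ^ (N - (p + 1)) = (m - 2) * 2 ^ (N - (p + 2)) := by
            rw [hE2, show (m - 2) / 2 * (2 * 2 ^ (N - (p + 2))) = ((m - 2) / 2 * 2) * 2 ^ (N - (p + 2)) by ring, show (m - 2) / 2 * 2 = m - 2 by omega]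
          rw [heq]; exact hb1 _ (by omega)
        have e3 : (2:ℕ) ^ (p + 1 - 1) = 2 ^ p := rfl
        have := IH ((m - 2) / 2 * 2 ^ (N - (p + 1))) hkk (p + 1) ((m - 2) / 2)
          (by omega) (by rw [e3]; omega) (le_refl _)
        rw [e3] at this
        rw [show p + 2 - 1 = p + 1 by omega,
          show (m + 2 * 2 ^ p - 2) / 2 = (m - 2) / 2 + 2 ^ p by omega]
        exact this
    rw [hEv, hEz, hf1, hf2, hg1, hg2]

lemma unit_decomp {N : ℕ} {a b bz : ℕ → X} {v z : ℕ → ℕ → X} (hN : 1 ≤ N)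
    (hv : IsRegSol f g N a b v) (hz : IsRegSol f g N (halfState v) bz z) :
    ∀ i, v (i + 1) (2 ^ (i + 1)) = z (i + 1) (2 ^ i) + betaMap g (b 0) a i := by
  intro i
  match i with
  | 0 =>
    have hEv := hv.2.2.2 1 2 (by omega) hN (by omega)
    have hEz := hz.2.2.2 1 1 (by omega) hN (by omega)
    unfold IdealEq at hEv hEz
    rw [if_neg (by omega)] at hEv
    rw [if_pos (by omega)] at hEz
    norm_num at hEv hEz
    have h10 : z 1 0 = v 1 1 := by
      rw [hz.2.1 1 (by omega) hN]
      show v 1 (2 ^ 0) = v 1 1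
      norm_num
    have h20 : z 2 0 = v 2 2 := by
      by_cases h2N : 2 ≤ N
      · rw [hz.2.1 2 (by omega) h2N]
        show v 2 (2 ^ 1) = v 2 2
        norm_num
      · rw [hz.2.2.1 2 (by omega), hv.2.2.1 2 (by omega)]
    show v 1 2 = z 1 1 + betaMap g (b 0) a 0
    rw [hEv, hEz, h10, h20, hv.1 0, hv.2.1 1 (by omega) hN]
    rfl
  | i + 1 =>
    have h := halfagree hv hz (2 ^ (i + 1) * 2 ^ (N - (i + 2))) (i + 2) (2 ^ (i + 1))
      (by omega) (le_of_eq rfl) (le_refl _)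
    show v (i + 2) (2 ^ (i + 2)) = z (i + 2) (2 ^ (i + 1)) + betaMap g (b 0) a (i + 1)
    have hβ : betaMap g (b 0) a (i + 1) = 0 := rfl
    rw [hβ, add_zero, ← h]
    congr 1
    rw [show i + 2 - 1 = i + 1 by omega]
    rw [pow_succ]
    ring

end Aux

section Key
variable [AddCommMonoid X] [TopologicalSpace X] [ContinuousAdd X]
variable {f g : X → X → X} {ψ : ℕ → (ℕ → X) → (ℕ → X)} {ψinf : (ℕ → X) → (ℕ → X)}

lemma ev_succ {P : ℕ → Prop} (h : ∀ᶠ N in atTop, P N) : ∀ᶠ N in atTop, P (N + 1) := by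
  obtain ⟨M, hM⟩ := eventually_atTop.1 h
  exact eventually_atTop.2 ⟨M, fun N hN => hM (N + 1) (by omega)⟩

lemma key1
    (hg : Continuous fun p : X × X => g p.1 p.2)
    (hψ : ∀ N, 1 ≤ N → ∀ (a' b' : ℕ → X) (v : ℕ → ℕ → X),
      IsRegSol f g N a' b' v → ψ N a' = halfState v)
    (hex : ∀ N, 1 ≤ N → ∀ a' b' : ℕ → X, ∃ v : ℕ → ℕ → X, IsRegSol f g N a' b' v)
    (hconv : MapConv ψ ψinf)
    {V : ℕ → ℕ → ℕ → X} {A B : ℕ → ℕ → X} {Ainf Binf : ℕ → X}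
    (hV : ∀ᶠ N in atTop, IsRegSol f g N (A N) (B N) (V N))
    (hA : ∀ i, Tendsto (fun N => A N i) atTop (𝓝 (Ainf i)))
    (hB : ∀ m, Tendsto (fun N => B N m) atTop (𝓝 (Binf m))) :
    ∀ t, Tendsto (fun N => intState (V N) t) atTop (𝓝 (phiIter g ψinf Binf t Ainf)) := by
  intro t
  induction t with
  | zero =>
    rw [tendsto_pi_nhds]
    intro i
    refine ((hA i).congr' ?_)
    filter_upwards [hV, eventually_ge_atTop (i + 1)] with N hN hNi
    show A N i = intState (V N) 0 i
    have : intState (V N) 0 i = V N (i + 1) 0 := by simp [intState]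
    rw [this, hN.2.1 (i + 1) (by omega) hNi]
    norm_num
  | succ t ih =>
    have h1 := hconv _ _ ih
    have h2 := hconv _ _ h1
    have hbeta : Tendsto (fun N => betaMap g (B N t) (intState (V N) t)) atTop
        (𝓝 (betaMap g (Binf t) (phiIter g ψinf Binf t Ainf))) := by
      rw [tendsto_pi_nhds]
      intro i
      match i with
      | 0 =>
        have hc : Tendsto (fun N => intState (V N) t 0) atTop
            (𝓝 (phiIter g ψinf Binf t Ainf 0)) :=
          ((continuous_apply 0).tendsto _).comp ih
        exact (hg.tendsto _).comp ((hB t).prodMk_nhds hc)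
      | i + 1 => exact tendsto_const_nhds
    have hsum := h2.add hbeta
    have htarget : phiIter g ψinf Binf (t + 1) Ainf
        = ψinf (ψinf (phiIter g ψinf Binf t Ainf))
          + betaMap g (Binf t) (phiIter g ψinf Binf t Ainf) := rfl
    rw [htarget]
    refine hsum.congr' ?_
    filter_upwards [hV, eventually_ge_atTop 1] with N hN h1N
    have hW := tshift_sol hN t
    obtain ⟨z, hz⟩ := hex N h1N (halfState (fun n m => V N n (m + t * 2 ^ n))) (fun _ => 0)
    have e1 := hψ N h1N _ _ _ hW
    have e2 := hψ N h1N _ _ _ hz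
    have e3 := unit_decomp h1N hW hz
    funext i
    show ψ N (ψ N (intState (V N) t)) i + betaMap g (B N t) (intState (V N) t) i
        = intState (V N) (t + 1) i
    rw [e1, e2]
    show z (i + 1) (2 ^ i) + betaMap g (B N t) (intState (V N) t) i = intState (V N) (t + 1) i
    have e4 := e3 i
    simp only [zero_add] at e4
    rw [← e4]
    show V N (i + 1) (2 ^ (i + 1) + t * 2 ^ (i + 1)) = V N (i + 1) ((t + 1) * 2 ^ (i + 1))
    congr 1
    ring

lemma key2
    (hg : Continuous fun p : X × X => g p.1 p.2)
    (hψ : ∀ N, 1 ≤ N → ∀ (a' b' : ℕ → X) (v : ℕ → ℕ → X),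
      IsRegSol f g N a' b' v → ψ N a' = halfState v)
    (hex : ∀ N, 1 ≤ N → ∀ a' b' : ℕ → X, ∃ v : ℕ → ℕ → X, IsRegSol f g N a' b' v)
    (hconv : MapConv ψ ψinf)
    {V : ℕ → ℕ → ℕ → X} {A B : ℕ → ℕ → X} {Ainf Binf : ℕ → X}
    (hV : ∀ᶠ N in atTop, IsRegSol f g N (A N) (B N) (V N))
    (hA : ∀ i, Tendsto (fun N => A N i) atTop (𝓝 (Ainf i)))
    (hB : ∀ m, Tendsto (fun N => B N m) atTop (𝓝 (Binf m))) :
    ∀ t, Tendsto (fun N => halfState (fun n m => V N n (m + t * 2 ^ n))) atTop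
      (𝓝 (ψinf (phiIter g ψinf Binf t Ainf))) := by
  intro t
  have h1 := hconv _ _ (key1 hg hψ hex hconv hV hA hB t)
  refine h1.congr' ?_
  filter_upwards [hV, eventually_ge_atTop 1] with N hN h1N
  exact hψ N h1N _ _ _ (tshift_sol hN t)

lemma key3
    (hg : Continuous fun p : X × X => g p.1 p.2)
    (hψ : ∀ N, 1 ≤ N → ∀ (a' b' : ℕ → X) (v : ℕ → ℕ → X),
      IsRegSol f g N a' b' v → ψ N a' = halfState v)
    (hex : ∀ N, 1 ≤ N → ∀ a' b' : ℕ → X, ∃ v : ℕ → ℕ → X, IsRegSol f g N a' b' v)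
    (hconv : MapConv ψ ψinf) :
    ∀ r n, 1 ≤ n → r < 2 ^ n →
      ∀ (V : ℕ → ℕ → ℕ → X) (A B : ℕ → ℕ → X) (Ainf Binf : ℕ → X),
        (∀ᶠ N in atTop, IsRegSol f g N (A N) (B N) (V N)) →
        (∀ i, Tendsto (fun N => A N i) atTop (𝓝 (Ainf i))) →
        (∀ m, Tendsto (fun N => B N m) atTop (𝓝 (Binf m))) →
        ∀ q, ∃ L, Tendsto (fun N => V N n (q * 2 ^ n + r)) atTop (𝓝 L) := by
  intro r
  induction r using Nat.strong_induction_on with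
  | _ r ihr =>
  intro n
  induction n using Nat.strong_induction_on with
  | _ n ihn =>
  intro hn hr V A B Ainf Binf hV hA hB q
  have hpow : (2:ℕ) ^ n = 2 * 2 ^ (n - 1) := by
    rw [← pow_succ']
    congr 1
    omega
  rcases Nat.eq_zero_or_pos r with hr0 | hr1
  · subst hr0
    refine ⟨phiIter g ψinf Binf q Ainf (n - 1), ?_⟩
    have h := ((continuous_apply (n - 1)).tendsto _).comp (key1 hg hψ hex hconv hV hA hB q)
    refine h.congr ?_
    intro N
    show intState (V N) q (n - 1) = V N n (q * 2 ^ n + 0)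
    unfold intState
    rw [show n - 1 + 1 = n by omega, add_zero]
  rcases lt_trichotomy r (2 ^ (n - 1)) with hlt | heq | hgt
  · -- strictly inside first half
    have hn2 : 2 ≤ n := by
      by_contra h
      have hn1 : n = 1 := by omega
      rw [hn1] at hlt
      norm_num at hlt
      omega
    obtain ⟨L, hL⟩ := ihn (n - 1) (by omega) (by omega) hlt
      (fun N n' m' => V (N + 1) (n' + 1) (m' + q * 2 ^ (n' + 1)))
      (fun N => sigPlus (intState (V (N + 1)) q))
      (fun N m => V (N + 1) 1 (m + q * 2 ^ 1))
      (sigPlus (phiIter g ψinf Binf q Ainf))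
      (fun m => if m % 2 = 0 then phiIter g ψinf Binf (q + m / 2) Ainf 0
        else ψinf (phiIter g ψinf Binf (q + m / 2) Ainf) 0)
      (by
        filter_upwards [ev_succ hV] with N hN
        exact sshift_sol (tshift_sol hN q))
      (by
        intro i
        have h := ((continuous_apply (i + 1)).tendsto _).comp
          (key1 hg hψ hex hconv hV hA hB q)
        exact h.comp (tendsto_add_atTop_nat 1))
      (by
        intro m
        by_cases hm2 : m % 2 = 0
        · simp only [if_pos hm2]
          have h := ((continuous_apply 0).tendsto _).comp
            (key1 hg hψ hex hconv hV hA hB (q + m / 2))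
          refine (h.comp (tendsto_add_atTop_nat 1)).congr ?_
          intro N
          show intState (V (N + 1)) (q + m / 2) 0 = V (N + 1) 1 (m + q * 2 ^ 1)
          unfold intState
          congr 1
          have e : (2:ℕ) ^ (0 + 1) = 2 := by norm_num
          have e2 : (2:ℕ) ^ 1 = 2 := by norm_num
          simp only [e, e2]
          omega
        · simp only [if_neg hm2]
          have h := ((continuous_apply 0).tendsto _).comp
            (key2 hg hψ hex hconv hV hA hB (q + m / 2))
          refine (h.comp (tendsto_add_atTop_nat 1)).congr ?_
          intro N
          show V (N + 1) (0 + 1) (2 ^ 0 + (q + m / 2) * 2 ^ (0 + 1)) = V (N + 1) 1 (m + q * 2 ^ 1)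
          congr 1
          have h1 : (2:ℕ) ^ (0 + 1) = 2 := by norm_num
          have h2 : (2:ℕ) ^ 1 = 2 := by norm_num
          have h3 : (2:ℕ) ^ 0 = 1 := by norm_num
          simp only [h1, h2, h3]
          omega)
      0
    refine ⟨L, ?_⟩
    rw [← tendsto_add_atTop_iff_nat 1]
    refine hL.congr ?_
    intro N
    show V (N + 1) ((n - 1) + 1) ((0 * 2 ^ (n - 1) + r) + q * 2 ^ ((n - 1) + 1))
        = V (N + 1) n (q * 2 ^ n + r)
    rw [show n - 1 + 1 = n by omega]
    congr 1
    omega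
  · -- exactly the half point
    refine ⟨ψinf (phiIter g ψinf Binf q Ainf) (n - 1), ?_⟩
    have h := ((continuous_apply (n - 1)).tendsto _).comp (key2 hg hψ hex hconv hV hA hB q)
    refine h.congr ?_
    intro N
    show V N ((n - 1) + 1) (2 ^ (n - 1) + q * 2 ^ ((n - 1) + 1)) = V N n (q * 2 ^ n + r)
    rw [show n - 1 + 1 = n by omega]
    congr 1
    omega
  · -- second half
    have hn2 : 2 ≤ n := by
      by_contra h
      have hn1 : n = 1 := by omega
      rw [hn1] at hgt hr
      norm_num at hgt hr
      omega
    obtain ⟨L, hL⟩ := ihr (r - 2 ^ (n - 1)) (by omega) n hn (by omega)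
      (fun N => if h : 1 ≤ N then
          (hex N h (halfState (fun n' m' => V N n' (m' + q * 2 ^ n'))) (fun _ => 0)).choose
        else fun _ _ => 0)
      (fun N => halfState (fun n' m' => V N n' (m' + q * 2 ^ n')))
      (fun _ _ => 0)
      (ψinf (phiIter g ψinf Binf q Ainf))
      (fun _ => 0)
      (by
        filter_upwards [eventually_ge_atTop 1] with N h1N
        rw [dif_pos h1N]
        exact (hex N h1N _ _).choose_spec)
      (fun i => ((continuous_apply i).tendsto _).comp (key2 hg hψ hex hconv hV hA hB q))
      (fun m => tendsto_const_nhds)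
      0
    refine ⟨L, ?_⟩
    refine hL.congr' ?_
    filter_upwards [hV, eventually_ge_atTop 1] with N hN h1N
    have hWsol := tshift_sol hN q
    have hZN : IsRegSol f g N (halfState (fun n' m' => V N n' (m' + q * 2 ^ n')))
        (fun _ => 0)
        ((fun N => if h : 1 ≤ N then
          (hex N h (halfState (fun n' m' => V N n' (m' + q * 2 ^ n'))) (fun _ => 0)).choose
        else fun _ _ => 0) N) := by
      simp only [dif_pos h1N]
      exact (hex N h1N _ _).choose_spec
    have hagree := halfagree hWsol hZN ((r - 2 ^ (n - 1)) * 2 ^ (N - n)) n (r - 2 ^ (n - 1))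
      hn2 (by omega) (le_refl _)
    calc ((fun N => if h : 1 ≤ N then
          (hex N h (halfState (fun n' m' => V N n' (m' + q * 2 ^ n'))) (fun _ => 0)).choose
        else fun _ _ => 0) N) n (0 * 2 ^ n + (r - 2 ^ (n - 1)))
        = ((fun N => if h : 1 ≤ N then
          (hex N h (halfState (fun n' m' => V N n' (m' + q * 2 ^ n'))) (fun _ => 0)).choose
        else fun _ _ => 0) N) n (r - 2 ^ (n - 1)) := by
          congr 1
          omega
      _ = V N n ((r - 2 ^ (n - 1)) + 2 ^ (n - 1) + q * 2 ^ n) := hagree.symm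
      _ = V N n (q * 2 ^ n + r) := by
          congr 1
          omega

end Key

/-- **Inviscid limit.** Let `ψ N` be the half-time flow maps of the
regularized solutions (pinned down via `hψ` and `hex`), and suppose there is a
continuous map `ψ^∞` with `ψ^{(N)} → ψ^∞` in the sense of map convergence.  Then
for any initial conditions `a` and boundary conditions `b`, with `u N` the
regularized solution at level `N`: (i) at every lattice point the regularized
solutions converge to a limit `u^∞`; (ii) `u^∞` is a (weak) solution of the ideal
system with the given data; (iii) at integer times `t ≥ 1`,
`u^∞(t) = φ^∞_{b_{t-1}} ∘ ⋯ ∘ φ^∞_{b_0}(a)` with `φ^∞_b = ψ^∞ ∘ ψ^∞ + β_b`. -/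
theorem statement6 {X : Type*} [MetricSpace X] [CompleteSpace X]
    [TopologicalSpace.SeparableSpace X] [AddCommMonoid X] [ContinuousAdd X]
    (f g : X → X → X) (hf : Continuous fun p : X × X => f p.1 p.2)
    (hg : Continuous fun p : X × X => g p.1 p.2)
    (ψ : ℕ → (ℕ → X) → (ℕ → X))
    (hψ : ∀ N, 1 ≤ N → ∀ (a' b' : ℕ → X) (v : ℕ → ℕ → X),
      IsRegSol f g N a' b' v → ψ N a' = halfState v)
    (hex : ∀ N, 1 ≤ N → ∀ a' b' : ℕ → X, ∃ v : ℕ → ℕ → X, IsRegSol f g N a' b' v)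
    (ψinf : (ℕ → X) → (ℕ → X)) (hcont : Continuous ψinf)
    (hconv : MapConv ψ ψinf)
    (a b : ℕ → X) (u : ℕ → ℕ → ℕ → X)
    (hu : ∀ N, 1 ≤ N → IsRegSol f g N a b (u N)) :
    ∃ uinf : ℕ → ℕ → X,
      (∀ n m : ℕ, Tendsto (fun N => u N n m) atTop (𝓝 (uinf n m))) ∧
      IsWeakSol f g a b uinf ∧
      (∀ t : ℕ, 1 ≤ t → intState uinf t = phiIter g ψinf b t a) := by
  classical
  have hV : ∀ᶠ N in atTop, IsRegSol f g N a b (u N) := by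
    filter_upwards [eventually_ge_atTop 1] with N hN
    exact hu N hN
  have hA : ∀ i, Tendsto (fun _ : ℕ => a i) atTop (𝓝 (a i)) := fun i => tendsto_const_nhds
  have hB : ∀ m, Tendsto (fun _ : ℕ => b m) atTop (𝓝 (b m)) := fun m => tendsto_const_nhds
  have hex3 : ∀ n m, ∃ L, Tendsto (fun N => u N n m) atTop (𝓝 L) := by
    intro n m
    rcases Nat.eq_zero_or_pos n with h0 | h1
    · subst h0
      refine ⟨b m, tendsto_const_nhds.congr' ?_⟩
      filter_upwards [hV] with N hN
      exact (hN.1 m).symm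
    · obtain ⟨L, hL⟩ := key3 hg hψ hex hconv (m % 2 ^ n) n h1
        (Nat.mod_lt _ (Nat.two_pow_pos _))
        u (fun _ => a) (fun _ => b) a b hV hA hB (m / 2 ^ n)
      refine ⟨L, hL.congr ?_⟩
      intro N
      congr 1
      rw [mul_comm, Nat.div_add_mod]
  choose uinf htend using hex3
  refine ⟨uinf, htend, ⟨?_, ?_, ?_⟩, ?_⟩
  · intro m
    refine tendsto_nhds_unique (htend 0 m) (tendsto_const_nhds.congr' ?_)
    filter_upwards [hV] with N hN
    exact (hN.1 m).symm
  · intro n hn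
    refine tendsto_nhds_unique (htend n 0) (tendsto_const_nhds.congr' ?_)
    filter_upwards [hV, eventually_ge_atTop n] with N hN hNn
    exact (hN.2.1 n hn hNn).symm
  · intro n m hn hm
    have hfl : Tendsto (fun N => f (u N n (m - 1)) (u N (n + 1) (2 * (m - 1)))) atTop
        (𝓝 (f (uinf n (m - 1)) (uinf (n + 1) (2 * (m - 1))))) :=
      (hf.tendsto _).comp ((htend n (m - 1)).prodMk_nhds (htend (n + 1) (2 * (m - 1))))
    unfold IdealEq
    by_cases hpar : m % 2 = 1
    · rw [if_pos hpar]
      refine tendsto_nhds_unique (htend n m) (hfl.congr' ?_)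
      filter_upwards [hV, eventually_ge_atTop n] with N hN hNn
      have hE := hN.2.2.2 n m hn hNn hm
      unfold IdealEq at hE
      rw [if_pos hpar] at hE
      exact hE.symm
    · rw [if_neg hpar]
      have hgl : Tendsto (fun N => g (u N (n - 1) ((m - 2) / 2)) (u N n (m - 2))) atTop
          (𝓝 (g (uinf (n - 1) ((m - 2) / 2)) (uinf n (m - 2)))) :=
        (hg.tendsto _).comp ((htend (n - 1) ((m - 2) / 2)).prodMk_nhds (htend n (m - 2)))
      refine tendsto_nhds_unique (htend n m) ((hfl.add hgl).congr' ?_)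
      filter_upwards [hV, eventually_ge_atTop n] with N hN hNn
      have hE := hN.2.2.2 n m hn hNn hm
      unfold IdealEq at hE
      rw [if_neg hpar] at hE
      exact hE.symm
  · intro t ht
    funext i
    have h1 := ((continuous_apply i).tendsto _).comp
      (key1 (V := u) (A := fun _ => a) (B := fun _ => b) hg hψ hex hconv hV hA hB t)
    exact tendsto_nhds_unique (htend (i + 1) (t * 2 ^ (i + 1))) h1


end SSRG
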